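/- Let r ≥ 2, w ≥ 2, and let H be an r-uniform hypergraph on a vertex set of size w. Let ∂₂H denote the set of 2-element subsets contained in some edge of H, and let its complement (within all 2-subsets of the vertex set) have size c. Then |H| + c ≤ C(w,2) if 2 ≤ w ≤ r+2, and |H| + c ≤ C(w,r) if w ≥ r+2. -/

import Mathlib

open Finset FinsetFamily

private lemma stepLYM {α : Type*} [Fintype α] [DecidableEq α] {𝒜 : Finset (Finset α)} {m : ℕ}
    (h : (𝒜 : Set (Finset α)).Sized (m + 1)) :
    𝒜.card * (Fintype.card α).choose m ≤ (∂ 𝒜).card * (Fintype.card α).choose (m + 1) := by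
  set n := Fintype.card α with hn
  by_cases hmn : m + 1 ≤ n
  · have key := Finset.card_mul_le_card_shadow_mul h
    have hsub : n - (m + 1) + 1 = n - m := by omega
    rw [hsub] at key
    apply Nat.le_of_mul_le_mul_right _ (Nat.succ_pos m)
    calc 𝒜.card * n.choose m * (m + 1) = 𝒜.card * (m + 1) * n.choose m := by ring
      _ ≤ (∂ 𝒜).card * (n - m) * n.choose m := Nat.mul_le_mul_right _ key
      _ = (∂ 𝒜).card * (n.choose m * (n - m)) := by ring
      _ = (∂ 𝒜).card * (n.choose (m + 1) * (m + 1)) := by rw [Nat.choose_succ_right_eq]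
      _ = (∂ 𝒜).card * n.choose (m + 1) * (m + 1) := by ring
  · have h0 : 𝒜 = ∅ := by
      ext s
      simp only [Finset.notMem_empty, iff_false]
      intro hs
      have h1 := h hs
      have h2 : s.card ≤ n := by simpa [hn] using Finset.card_le_univ s
      omega
    simp [h0]

private lemma iterLYM {α : Type*} [Fintype α] [DecidableEq α] (𝒜 : Finset (Finset α)) {k : ℕ}
    (hk : k ≤ Fintype.card α) (h : (𝒜 : Set (Finset α)).Sized k) :
    ∀ j, j ≤ k → 𝒜.card * (Fintype.card α).choose (k - j)
      ≤ (∂^[j] 𝒜).card * (Fintype.card α).choose k := by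
  intro j
  induction j with
  | zero => intro _; simp
  | succ j ih =>
    intro hj
    have ihh := ih (by omega)
    have hs : ((∂^[j] 𝒜 : Finset (Finset α)) : Set (Finset α)).Sized (k - j) := h.shadow_iterate
    have hkj : k - j = (k - (j + 1)) + 1 := by omega
    have step : (∂^[j] 𝒜).card * (Fintype.card α).choose (k - (j + 1))
        ≤ (∂^[j+1] 𝒜).card * (Fintype.card α).choose (k - j) := by
      rw [Function.iterate_succ_apply']
      have := stepLYM (𝒜 := ∂^[j] 𝒜) (m := k - (j + 1)) (by rw [← hkj]; exact hs)
      rwa [← hkj] at this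
    have hpos : 0 < (Fintype.card α).choose (k - j) := Nat.choose_pos (by omega)
    apply Nat.le_of_mul_le_mul_right _ hpos
    calc 𝒜.card * (Fintype.card α).choose (k - (j + 1)) * (Fintype.card α).choose (k - j)
        = (𝒜.card * (Fintype.card α).choose (k - j)) * (Fintype.card α).choose (k - (j + 1)) := by
          ring
      _ ≤ ((∂^[j] 𝒜).card * (Fintype.card α).choose k) * (Fintype.card α).choose (k - (j + 1)) :=
          Nat.mul_le_mul_right _ ihh
      _ = ((∂^[j] 𝒜).card * (Fintype.card α).choose (k - (j + 1))) * (Fintype.card α).choose k := by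
          ring
      _ ≤ ((∂^[j+1] 𝒜).card * (Fintype.card α).choose (k - j)) * (Fintype.card α).choose k :=
          Nat.mul_le_mul_right _ step
      _ = (∂^[j+1] 𝒜).card * (Fintype.card α).choose k * (Fintype.card α).choose (k - j) := by
          ring

private lemma chooseMono {n : ℕ} : ∀ {a b : ℕ}, a ≤ b → b ≤ n / 2 → n.choose a ≤ n.choose b := by
  intro a b hab
  induction b, hab using Nat.le_induction with
  | base => intro _; exact le_rfl
  | succ b hb ih =>
    intro h
    exact (ih (by omega)).trans (Nat.choose_le_succ_of_lt_half_left (by omega))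

private lemma chooseTwoLe {r w : ℕ} (hr : 2 ≤ r) (hrw : r + 2 ≤ w) :
    w.choose 2 ≤ w.choose r := by
  rcases le_or_gt r (w / 2) with h | h
  · exact chooseMono hr h
  · have h1 : r ≤ w := by omega
    rw [← Nat.choose_symm h1]
    exact chooseMono (by omega) (by omega)

private lemma chooseLeTwo {r w : ℕ} (hr : 2 ≤ r) (hw : 2 ≤ w) (hwr : w ≤ r + 2) (hrle : r ≤ w) :
    w.choose r ≤ w.choose 2 := by
  rw [← Nat.choose_symm hrle]
  have hd : w - r ≤ 2 := by omega
  interval_cases h : (w - r)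
  · simpa [Nat.one_le_iff_ne_zero, Nat.pos_iff_ne_zero] using Nat.choose_pos (show 2 ≤ w by omega)
  · have hw3 : 3 ≤ w := by omega
    rw [Nat.choose_one_right]
    have h2 : w * 2 ≤ w * (w - 1) := Nat.mul_le_mul_left _ (by omega)
    calc w = w * 2 / 2 := by omega
      _ ≤ w * (w - 1) / 2 := Nat.div_le_div_right h2
      _ = w.choose 2 := (Nat.choose_two_right w).symm
  · exact le_rfl

private lemma iterShadowCompls {α : Type*} [Fintype α] [DecidableEq α]
    (𝒜 : Finset (Finset α)) (j : ℕ) : ∂^[j] (𝒜ᶜˢ) = (∂⁺^[j] 𝒜)ᶜˢ := by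
  induction j with
  | zero => rfl
  | succ j ih =>
    rw [Function.iterate_succ_apply', Function.iterate_succ_apply', ih, Finset.shadow_compls]

theorem stmt_5 {V : Type*} [Fintype V] [DecidableEq V] (r w : ℕ)
    (hr : 2 ≤ r) (hw : 2 ≤ w) (hV : Fintype.card V = w)
    (H : Finset (Finset V)) (hH : ∀ e ∈ H, e.card = r)
    (c : ℕ)
    (hc : c = ((Finset.univ.powersetCard 2 : Finset (Finset V)).filter
        (fun p => ∀ e ∈ H, ¬ p ⊆ e)).card) :
    (w ≤ r + 2 → H.card + c ≤ w.choose 2) ∧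
    (r + 2 ≤ w → H.card + c ≤ w.choose r) := by
  subst hV
  have hSized : (H : Set (Finset V)).Sized r := fun e he => hH e he
  set P := ((Finset.univ.powersetCard 2 : Finset (Finset V)).filter
      (fun p => ∀ e ∈ H, ¬ p ⊆ e)) with hP
  have hPsub : P ⊆ Finset.univ.powersetCard 2 := Finset.filter_subset _ _
  set 𝒮 := ∂^[r-2] H with hSdef
  have hSeq : 𝒮 = Finset.univ.powersetCard 2 \ P := by
    ext t
    constructor
    · intro ht
      obtain ⟨s, hs, hts, hcard⟩ := Finset.mem_shadow_iterate_iff_exists_mem_card_add.mp ht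
      have hsr := hH s hs
      have ht2 : t.card = 2 := by omega
      rw [Finset.mem_sdiff, Finset.mem_powersetCard, hP, Finset.mem_filter]
      refine ⟨⟨Finset.subset_univ t, ht2⟩, ?_⟩
      rintro ⟨-, hall⟩
      exact hall s hs hts
    · intro ht
      rw [Finset.mem_sdiff, Finset.mem_powersetCard, hP, Finset.mem_filter] at ht
      obtain ⟨⟨-, ht2⟩, hnp⟩ := ht
      have hex : ∃ e ∈ H, t ⊆ e := by
        by_contra hcon
        push_neg at hcon
        exact hnp ⟨Finset.mem_powersetCard.mpr ⟨Finset.subset_univ t, ht2⟩, hcon⟩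
      obtain ⟨e, he, hte⟩ := hex
      exact Finset.mem_shadow_iterate_iff_exists_mem_card_add.mpr
        ⟨e, he, hte, by rw [hH e he, ht2]; omega⟩
  have hcard2 : (Finset.univ.powersetCard 2 : Finset (Finset V)).card
      = (Fintype.card V).choose 2 := by
    rw [Finset.card_powersetCard, Finset.card_univ]
  have hPle := Finset.card_le_card hPsub
  have hScard : 𝒮.card + c = (Fintype.card V).choose 2 := by
    rw [hSeq, Finset.card_sdiff_of_subset hPsub, hc]
    omega
  constructor
  · intro hwr
    rcases le_or_gt r (Fintype.card V) with hrle | hrlt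
    · have key := iterLYM H hrle hSized (r - 2) (by omega)
      have h2 : r - (r - 2) = 2 := by omega
      rw [h2] at key
      have hch : (Fintype.card V).choose r ≤ (Fintype.card V).choose 2 :=
        chooseLeTwo hr hw hwr hrle
      have key2 : H.card * (Fintype.card V).choose 2 ≤ 𝒮.card * (Fintype.card V).choose 2 :=
        key.trans (Nat.mul_le_mul_left _ hch)
      have hHS : H.card ≤ 𝒮.card :=
        Nat.le_of_mul_le_mul_right key2 (Nat.choose_pos hw)
      omega
    · have hH0 : H = ∅ := by
        ext e
        simp only [Finset.notMem_empty, iff_false]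
        intro he
        have h1 := hH e he
        have h2 : e.card ≤ Fintype.card V := Finset.card_le_univ e
        omega
      have hcle : c ≤ (Fintype.card V).choose 2 := by
        rw [hc]; exact hPle.trans_eq hcard2
      rw [hH0]
      simpa using hcle
  · intro hrw
    set t : ↥P → Finset (Finset V) :=
      fun p => (Finset.univ.powersetCard r).filter (fun s => (p : Finset V) ⊆ s) with ht
    have hall : ∀ S : Finset ↥P, S.card ≤ (S.biUnion t).card := by
      intro S
      set S' : Finset (Finset V) := S.image Subtype.val with hS'
      have hS'card : S'.card = S.card :=
        Finset.card_image_of_injective _ Subtype.val_injective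
      have hS'sub : ∀ p ∈ S', p.card = 2 := by
        intro p hp
        obtain ⟨q, hq, rfl⟩ := Finset.mem_image.mp hp
        exact (Finset.mem_powersetCard.mp (hPsub q.2)).2
      have hsizedC : ((S'ᶜˢ : Finset (Finset V)) : Set (Finset V)).Sized (Fintype.card V - 2) := by
        intro x hx
        rw [Finset.mem_coe, Finset.mem_compls] at hx
        have h2 := hS'sub _ hx
        have h3 : (xᶜ)ᶜ = x := compl_compl x
        have h4 : ((xᶜ)ᶜ : Finset V).card = Fintype.card V - (xᶜ).card := Finset.card_compl _
        rw [h3] at h4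
        rw [h4, h2]
      have key := iterLYM (S'ᶜˢ) (k := Fintype.card V - 2) (by omega) hsizedC (r - 2) (by omega)
      have e1 : Fintype.card V - 2 - (r - 2) = Fintype.card V - r := by omega
      rw [e1, iterShadowCompls, Finset.card_compls, Finset.card_compls,
        Nat.choose_symm (show r ≤ Fintype.card V by omega),
        Nat.choose_symm (show 2 ≤ Fintype.card V by omega)] at key
      have hch := chooseTwoLe hr hrw
      have key2 : S'.card * (Fintype.card V).choose r
          ≤ (∂⁺^[r-2] S').card * (Fintype.card V).choose r :=
        key.trans (Nat.mul_le_mul_left _ hch)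
      have hle : S'.card ≤ (∂⁺^[r-2] S').card :=
        Nat.le_of_mul_le_mul_right key2 (Nat.choose_pos (by omega))
      have hsub : (∂⁺^[r-2] S') ⊆ S.biUnion t := by
        intro u hu
        obtain ⟨p, hp, hpu, hcard⟩ := Finset.mem_upShadow_iterate_iff_exists_mem_card_add.mp hu
        obtain ⟨q, hq, rfl⟩ := Finset.mem_image.mp hp
        refine Finset.mem_biUnion.mpr ⟨q, hq, ?_⟩
        rw [ht, Finset.mem_filter, Finset.mem_powersetCard]
        have h2 := hS'sub _ hp
        exact ⟨⟨Finset.subset_univ u, by omega⟩, hpu⟩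
      calc S.card = S'.card := hS'card.symm
        _ ≤ (∂⁺^[r-2] S').card := hle
        _ ≤ (S.biUnion t).card := Finset.card_le_card hsub
    obtain ⟨f, hfinj, hf⟩ := (Finset.all_card_le_biUnion_card_iff_exists_injective t).mp hall
    set F := (Finset.univ : Finset ↥P).image f with hF
    have hFcard : F.card = P.card := by
      rw [Finset.card_image_of_injective _ hfinj, Finset.card_univ, Fintype.card_coe]
    have hFr : F ⊆ Finset.univ.powersetCard r := by
      intro u hu
      obtain ⟨p, -, rfl⟩ := Finset.mem_image.mp hu
      exact Finset.filter_subset _ _ (hf p)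
    have hdisj : Disjoint F H := by
      rw [Finset.disjoint_left]
      rintro u hu huH
      obtain ⟨p, -, rfl⟩ := Finset.mem_image.mp hu
      have hsubp : (p : Finset V) ⊆ f p := (Finset.mem_filter.mp (hf p)).2
      have hpP : (p : Finset V) ∈ P := p.2
      exact (Finset.mem_filter.mp hpP).2 (f p) huH hsubp
    have hHr : H ⊆ Finset.univ.powersetCard r := fun e he =>
      Finset.mem_powersetCard.mpr ⟨Finset.subset_univ e, hH e he⟩
    have hcount : (F ∪ H).card ≤ (Fintype.card V).choose r := by
      refine (Finset.card_le_card (Finset.union_subset hFr hHr)).trans_eq ?_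
      rw [Finset.card_powersetCard, Finset.card_univ]
    rw [Finset.card_union_of_disjoint hdisj, hFcard] at hcount
    omega
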